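/- Work in ℝ³ with coordinates (x,y,z), standard Euclidean gradient ∇ and cross product ×, and standard basis e₁, e₂, e₃. Let ψ¹, α¹ : ℝ³ → ℝ be continuously differentiable and define the vector field B¹ = ∇x × ∇α¹ + ∇ψ¹ × ∇y (where ∇x = e₁ and ∇y = e₂), and set B⁰ = e₃, ψ⁰(x,y,z) = x, α⁰(x,y,z) = y. Then at every point of ℝ³: B⁰ · ∇ψ¹ + B¹ · ∇ψ⁰ = 0 and B⁰ · ∇α¹ + B¹ · ∇α⁰ = 0. -/
import Mathlib


open Matrix

noncomputable section

/-- Points of ℝ³ as functions `Fin 3 → ℝ`; coordinates `(x, y, z) = (p 0, p 1, p 2)`. -/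
abbrev E3 := Fin 3 → ℝ

/-- Standard basis vectors of ℝ³. -/
def e3 (i : Fin 3) : E3 := Pi.single i 1

/-- Euclidean gradient of a scalar field on ℝ³. -/
def grad3 (f : E3 → ℝ) (p : E3) : E3 := fun i => fderiv ℝ f p (e3 i)

lemma grad_coord (i : Fin 3) (p : E3) : grad3 (fun q : E3 => q i) p = e3 i := by
  funext j
  have h : fderiv ℝ (fun q : E3 => q i) p = ContinuousLinearMap.proj i :=
    (ContinuousLinearMap.proj i : E3 →L[ℝ] ℝ).fderiv
  simp [grad3, h, e3, Pi.single_apply, eq_comm]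

/-- With `B⁰ = e₃`, `ψ⁰ = x`, `α⁰ = y`, the first-order field
`B¹ = ∇x × ∇α¹ + ∇ψ¹ × ∇y` satisfies both linearized magnetic differential equations
`B⁰·∇ψ¹ + B¹·∇ψ⁰ = 0` and `B⁰·∇α¹ + B¹·∇α⁰ = 0`. -/
theorem statement7 (ψ1 α1 : E3 → ℝ)
    (hψ1 : ContDiff ℝ 1 ψ1) (hα1 : ContDiff ℝ 1 α1)
    (B1 : E3 → E3)
    (hB1 : ∀ p : E3, B1 p = crossProduct (e3 0) (grad3 α1 p)
                            + crossProduct (grad3 ψ1 p) (e3 1))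
    (B0 : E3) (hB0 : B0 = e3 2)
    (ψ0 α0 : E3 → ℝ)
    (hψ0 : ψ0 = fun p => p 0) (hα0 : α0 = fun p => p 1) :
    ∀ p : E3,
      B0 ⬝ᵥ grad3 ψ1 p + B1 p ⬝ᵥ grad3 ψ0 p = 0 ∧
      B0 ⬝ᵥ grad3 α1 p + B1 p ⬝ᵥ grad3 α0 p = 0 := by
  intro p
  subst hB0 hψ0 hα0
  rw [hB1, grad_coord 0 p, grad_coord 1 p]
  constructor <;>
  · simp [dotProduct, crossProduct, e3, Fin.sum_univ_three, Pi.single_apply]
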